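/- Let V be an F_{q^2}-subspace of F_{q^n} (n = 2m) of F_{q^2}-dimension m − ρ'. Then for every integer u with wt_q(u) ≤ (n − 2ρ')(q−1) − 1, or with wt_q(u) = (n − 2ρ')(q−1) and O(u) ≠ E(u), the power sum Σ_{g ∈ V, g ≠ 0} g^u equals 0. -/

import Mathlib

/-- The base-`q` digit sum (`q`-weight) over `n` digit positions. -/
def wtq (q n u : ℕ) : ℕ := ∑ i ∈ Finset.range n, u / q ^ i % q

/-- The sum of odd-position base-`q` digits of `u` (over `n` positions). -/
def Odd_q (q n u : ℕ) : ℕ := ∑ i ∈ (Finset.range n).filter (fun i => i % 2 = 1), u / q ^ i % q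

/-- The sum of even-position base-`q` digits of `u` (over `n` positions). -/
def Even_q (q n u : ℕ) : ℕ := ∑ i ∈ (Finset.range n).filter (fun i => i % 2 = 0), u / q ^ i % q

lemma wtq_zero (b u : ℕ) : wtq b 0 u = 0 := by simp [wtq]

lemma wtq_succ (b N u : ℕ) : wtq b (N + 1) u = u % b + wtq b N (u / b) := by
  unfold wtq
  rw [Finset.sum_range_succ']
  simp only [pow_zero, Nat.div_one, pow_succ']
  rw [add_comm]
  congr 1
  refine Finset.sum_congr rfl fun i _ => ?_
  rw [Nat.div_div_eq_div_mul]

lemma wtq_pos {b N u : ℕ} (hb : 2 ≤ b) (hu : 1 ≤ u) (hN : u < b ^ N) : 1 ≤ wtq b N u := by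
  induction N generalizing u with
  | zero => simp at hN; omega
  | succ N ih =>
    rw [wtq_succ]
    rcases Nat.eq_zero_or_pos (u % b) with h | h
    · have hb0 : 0 < b := by omega
      have hdvd : b ∣ u := Nat.dvd_of_mod_eq_zero h
      have h1 : 1 ≤ u / b := Nat.one_le_div_iff hb0 |>.mpr (Nat.le_of_dvd (by omega) hdvd)
      have h2 : u / b < b ^ N := by
        rw [Nat.div_lt_iff_lt_mul hb0]
        calc u < b ^ (N + 1) := hN
        _ = b ^ N * b := by ring
      have := ih h1 h2
      omega
    · omega

lemma wtq_modEq {b : ℕ} (hb : 2 ≤ b) : ∀ N u, u < b ^ N → wtq b N u ≡ u [MOD b - 1] := by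
  intro N
  induction N with
  | zero =>
    intro u hu
    have h0 : u = 0 := by simpa using hu
    subst h0
    simp [wtq_zero]
    rfl
  | succ N ih =>
    intro u hu
    rw [wtq_succ]
    have h2 : u / b < b ^ N := by
      rw [Nat.div_lt_iff_lt_mul (by omega)]
      calc u < b ^ (N + 1) := hu
      _ = b ^ N * b := by ring
    have h3 : u % b + wtq b N (u / b) ≡ u % b + u / b [MOD b - 1] :=
      Nat.ModEq.add_left _ (ih _ h2)
    refine h3.trans ?_
    have hbb : b ≡ 1 [MOD b - 1] := (Nat.modEq_iff_dvd' (by omega)).mpr dvd_rfl |>.symm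
    calc u % b + u / b ≡ u % b + b * (u / b) [MOD b - 1] := by
          exact Nat.ModEq.add_left _ (by simpa using (hbb.mul_right (u / b)).symm)
      _ = u := Nat.mod_add_div u b

lemma wtq_add_of_nc {b : ℕ} (hb : 2 ≤ b) :
    ∀ (N a c : ℕ), (∀ i, 1 ≤ i → a % b ^ i + c % b ^ i < b ^ i) →
    wtq b N (a + c) = wtq b N a + wtq b N c := by
  intro N
  induction N with
  | zero => intro a c _; simp [wtq_zero]
  | succ N ih =>
    intro a c h
    have hb0 : 0 < b := by omega
    have h1 : a % b + c % b < b := by simpa using h 1 le_rfl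
    have hmod : (a + c) % b = a % b + c % b := by
      rw [Nat.add_mod, Nat.mod_eq_of_lt h1]
    have hdiv : (a + c) / b = a / b + c / b := by
      rw [Nat.add_div hb0, if_neg (by omega)]; omega
    have hnc : ∀ i, 1 ≤ i → (a / b) % b ^ i + (c / b) % b ^ i < b ^ i := by
      intro i hi
      have e1 : a / b % b ^ i = a % (b * b ^ i) / b := (Nat.mod_mul_right_div_self a b (b ^ i)).symm
      have e2 : c / b % b ^ i = c % (b * b ^ i) / b := (Nat.mod_mul_right_div_self c b (b ^ i)).symm
      rw [e1, e2]
      have h3 : a % (b * b ^ i) + c % (b * b ^ i) < b * b ^ i := by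
        have := h (i + 1) (by omega)
        calc a % (b * b ^ i) + c % (b * b ^ i) = a % b ^ (i+1) + c % b ^ (i+1) := by
              rw [pow_succ']
          _ < b ^ (i + 1) := this
          _ = b * b ^ i := by rw [pow_succ']
      have h4 : a % (b * b ^ i) / b + c % (b * b ^ i) / b ≤ (a % (b * b ^ i) + c % (b * b ^ i)) / b := by
        rw [Nat.le_div_iff_mul_le hb0, add_mul]
        exact Nat.add_le_add (Nat.div_mul_le_self _ _) (Nat.div_mul_le_self _ _)
      calc a % (b * b ^ i) / b + c % (b * b ^ i) / b
          ≤ (a % (b * b ^ i) + c % (b * b ^ i)) / b := h4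
        _ < b ^ i := by
            rw [Nat.div_lt_iff_lt_mul hb0]
            calc a % (b * b ^ i) + c % (b * b ^ i) < b * b ^ i := h3
              _ = b ^ i * b := by ring
    rw [wtq_succ, wtq_succ, wtq_succ, hmod, hdiv, ih _ _ hnc]
    ring

lemma choose_nc {p : ℕ} [Fact p.Prime] {u j : ℕ} (hj : j ≤ u) (h : ¬ p ∣ u.choose j) :
    ∀ i, 1 ≤ i → j % p ^ i + (u - j) % p ^ i < p ^ i := by
  have hp2 : 2 ≤ p := (Fact.out : p.Prime).two_le
  have hval : padicValNat p (u.choose j) = 0 := by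
    by_contra h0
    exact h (dvd_trans (dvd_pow_self p h0) pow_padicValNat_dvd)
  rw [padicValNat_choose hj (Nat.lt_succ_self (Nat.log p u))] at hval
  intro i hi
  by_cases hib : i < Nat.log p u + 1
  · have hemp := Finset.card_eq_zero.mp hval
    by_contra hcon
    push_neg at hcon
    have : i ∈ (Finset.Ico 1 (Nat.log p u + 1)).filter
        (fun i => p ^ i ≤ j % p ^ i + (u - j) % p ^ i) := by
      simp only [Finset.mem_filter, Finset.mem_Ico]
      exact ⟨⟨hi, hib⟩, hcon⟩
    rw [hemp] at this
    exact absurd this (Finset.notMem_empty i)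
  · calc j % p ^ i + (u - j) % p ^ i ≤ j + (u - j) := Nat.add_le_add (Nat.mod_le _ _) (Nat.mod_le _ _)
      _ = u := by omega
      _ < p ^ (Nat.log p u + 1) := Nat.lt_pow_succ_log_self (by omega) u
      _ ≤ p ^ i := Nat.pow_le_pow_right (by omega) (by omega)

lemma sum_pow_K {K : Type*} [Field K] [Fintype K] {j : ℕ} (hj : j ≠ 0)
    (h : ¬ (Fintype.card K - 1) ∣ j) : ∑ x : K, x ^ j = 0 := by
  classical
  let φ : Kˣ ↪ K := ⟨fun x ↦ x, fun _ _ h => Units.ext h⟩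
  have hφ : ∀ x : Kˣ, φ x = x := fun _ => rfl
  have huniv : (Finset.univ.map φ) = Finset.univ \ {0} := by
    ext x
    simpa only [Finset.mem_map, Finset.mem_univ, Function.Embedding.coeFn_mk, true_and,
      Finset.mem_sdiff, Finset.mem_singleton, hφ] using (show (∃ a : Kˣ, (a : K) = x) ↔ x ≠ 0 from isUnit_iff_ne_zero)
  calc
    ∑ x : K, x ^ j = ∑ x ∈ Finset.univ \ {(0 : K)}, x ^ j := by
      rw [← Finset.sum_sdiff (Finset.subset_univ {0}), Finset.sum_singleton, zero_pow hj, add_zero]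
    _ = ∑ x : Kˣ, (x ^ j : K) := by simp [hφ, ← huniv, Finset.sum_map]
    _ = 0 := by rw [FiniteField.sum_pow_units K j, if_neg h]

lemma lemA {K2 F : Type*} [Field K2] [Field F] [Algebra K2 F] [Fintype K2] [Fintype F] :
    ∀ (k : ℕ) (v : Fin k → F) (u N : ℕ), 1 ≤ u → u < (Fintype.card K2) ^ N →
    wtq (Fintype.card K2) N u < k * (Fintype.card K2 - 1) →
    ∑ c : Fin k → K2, (∑ i, algebraMap K2 F (c i) * v i) ^ u = 0 := by
  classical
  set Q := Fintype.card K2 with hQdef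
  have hQ2 : 2 ≤ Q := Fintype.one_lt_card
  set p := ringChar F with hpdef
  haveI : CharP F p := ringChar.charP F
  have hp : p.Prime := CharP.char_is_prime F p
  haveI : Fact p.Prime := ⟨hp⟩
  haveI : CharP K2 p := (algebraMap K2 F).charP (algebraMap K2 F).injective p
  obtain ⟨e, -, hQe⟩ := FiniteField.card K2 p
  rw [← hQdef] at hQe
  have hQF : (Q : F) = 0 := by
    rw [← map_natCast (algebraMap K2 F), hQdef, FiniteField.cast_card_eq_zero, map_zero]
  intro k
  induction k with
  | zero => intro v u N hu1 huN hwt; simp at hwt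
  | succ k ih =>
    intro v u N hu1 huN hwt
    set φ := algebraMap K2 F with hφ
    set y : (Fin k → K2) → F := fun c => ∑ i, φ (c i) * v i.succ with hy
    have hsplit : ∑ c : Fin (k+1) → K2, (∑ i, φ (c i) * v i) ^ u
        = ∑ t : K2, ∑ c : Fin k → K2, (φ t * v 0 + y c) ^ u := by
      rw [← Equiv.sum_comp (Fin.consEquiv (fun _ => K2))
        (fun c : Fin (k+1) → K2 => (∑ i, φ (c i) * v i) ^ u), Fintype.sum_prod_type]
      refine Finset.sum_congr rfl fun t _ => Finset.sum_congr rfl fun c _ => ?_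
      congr 1
      rw [Fin.sum_univ_succ]
      simp [Fin.consEquiv, hy]
    rw [hsplit]
    calc ∑ t : K2, ∑ c : Fin k → K2, (φ t * v 0 + y c) ^ u
        = ∑ t : K2, ∑ c : Fin k → K2, ∑ j ∈ Finset.range (u+1),
            (φ t * v 0) ^ j * (y c) ^ (u - j) * (u.choose j : F) := by
          refine Finset.sum_congr rfl fun t _ => Finset.sum_congr rfl fun c _ => ?_
          rw [add_pow]
      _ = ∑ j ∈ Finset.range (u+1), ∑ t : K2, ∑ c : Fin k → K2,
            (φ t * v 0) ^ j * (y c) ^ (u - j) * (u.choose j : F) := by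
          rw [show (∑ t : K2, ∑ c : Fin k → K2, ∑ j ∈ Finset.range (u+1),
              (φ t * v 0) ^ j * (y c) ^ (u - j) * (u.choose j : F))
              = ∑ t : K2, ∑ j ∈ Finset.range (u+1), ∑ c : Fin k → K2,
              (φ t * v 0) ^ j * (y c) ^ (u - j) * (u.choose j : F) from
            Finset.sum_congr rfl fun t _ => Finset.sum_comm]
          exact Finset.sum_comm
      _ = ∑ j ∈ Finset.range (u+1),
            (∑ t : K2, (φ t) ^ j) * (v 0 ^ j * ((∑ c : Fin k → K2, (y c) ^ (u - j)) *
              (u.choose j : F))) := by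
          refine Finset.sum_congr rfl fun j _ => ?_
          rw [Finset.sum_mul]
          refine Finset.sum_congr rfl fun t _ => ?_
          rw [Finset.sum_mul, Finset.mul_sum, Finset.mul_sum]
          refine Finset.sum_congr rfl fun c _ => ?_
          ring
      _ = 0 := by
          refine Finset.sum_eq_zero fun j hj => ?_
          have hju : j ≤ u := by
            have := Finset.mem_range.mp hj; omega
          by_cases hj0 : j = 0
          · subst hj0
            have h1 : (∑ t : K2, (φ t) ^ (0:ℕ)) = 0 := by
              simp only [pow_zero, Finset.sum_const, Finset.card_univ, nsmul_eq_mul, mul_one]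
              exact hQF
            rw [h1, zero_mul]
          by_cases hC : (u.choose j : F) = 0
          · rw [hC]; ring
          by_cases hdvd : (Q - 1) ∣ j
          · by_cases hjeq : j = u
            · subst hjeq
              rcases Nat.eq_zero_or_pos k with hk | hk
              · exfalso
                subst hk
                have hw1 := wtq_pos hQ2 hu1 huN
                have hmod := wtq_modEq hQ2 N j huN
                have hdw : (Q - 1) ∣ wtq Q N j :=
                  (Nat.modEq_zero_iff_dvd).mp (hmod.trans ((Nat.modEq_zero_iff_dvd).mpr hdvd))
                have := Nat.le_of_dvd hw1 hdw
                have hwt' : wtq Q N j < Q - 1 := by simpa using hwt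
                omega
              · have hS : (∑ c : Fin k → K2, (y c) ^ (j - j)) = 0 := by
                  simp only [Nat.sub_self, pow_zero, Finset.sum_const, Finset.card_univ,
                    nsmul_eq_mul, mul_one]
                  rw [Fintype.card_fun, Fintype.card_fin]
                  push_cast
                  rw [hQF]
                  exact zero_pow (by omega)
                rw [hS]; ring
            · have hpC : ¬ p ∣ u.choose j := fun hd => hC ((CharP.cast_eq_zero_iff F p _).mpr hd)
              have hnc := choose_nc hju hpC
              have he1 : 1 ≤ (e : ℕ) := e.2
              have hncQ : ∀ i, 1 ≤ i → j % Q ^ i + (u - j) % Q ^ i < Q ^ i := by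
                intro i hi
                have := hnc (e * i) (Nat.mul_pos he1 hi)
                rwa [hQe, ← pow_mul]
              have hadd : wtq Q N u = wtq Q N j + wtq Q N (u - j) := by
                have := wtq_add_of_nc hQ2 N j (u - j) hncQ
                rwa [Nat.add_sub_cancel' hju] at this
              have hjlt : j < Q ^ N := lt_of_le_of_lt hju huN
              have hj1 : 1 ≤ j := by omega
              have hwj : Q - 1 ≤ wtq Q N j := by
                have hmod := wtq_modEq hQ2 N j hjlt
                have hdw : (Q - 1) ∣ wtq Q N j :=
                  (Nat.modEq_zero_iff_dvd).mp (hmod.trans ((Nat.modEq_zero_iff_dvd).mpr hdvd))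
                exact Nat.le_of_dvd (wtq_pos hQ2 hj1 hjlt) hdw
              have h3 : wtq Q N (u - j) < k * (Q - 1) := by
                have hx : (k+1) * (Q-1) = k*(Q-1) + (Q-1) := by ring
                rw [hx] at hwt
                linarith
              have hmid := ih (fun i => v i.succ) (u - j) N (by omega) (by omega) h3
              have hmid' : (∑ c : Fin k → K2, (y c) ^ (u - j)) = 0 := by
                simpa [hy] using hmid
              rw [hmid']
              ring
          · have h1 : (∑ t : K2, (φ t) ^ j) = 0 := by
              simp_rw [← map_pow]
              rw [← map_sum, sum_pow_K hj0 hdvd, map_zero]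
            rw [h1, zero_mul]

lemma wtq_eq_even_add_odd (q n u : ℕ) : wtq q n u = Even_q q n u + Odd_q q n u := by
  unfold wtq Even_q Odd_q
  rw [Finset.sum_filter, Finset.sum_filter, ← Finset.sum_add_distrib]
  refine Finset.sum_congr rfl fun i _ => ?_
  rcases Nat.mod_two_eq_zero_or_one i with h | h <;> simp [h]

lemma even_q_eq (q m u : ℕ) :
    Even_q q (2 * m) u = ∑ i ∈ Finset.range m, u / q ^ (2 * i) % q := by
  induction m with
  | zero => simp [Even_q]
  | succ m ih =>
    have h2 : 2 * (m + 1) = (2 * m + 1) + 1 := by ring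
    have hx : (2 * m) % 2 = 0 := by omega
    have hy : (2 * m + 1) % 2 = 1 := by omega
    unfold Even_q at ih ⊢
    rw [h2, Finset.sum_filter, Finset.sum_range_succ, Finset.sum_range_succ,
      ← Finset.sum_filter, ih, Finset.sum_range_succ]
    simp [hx, hy]

lemma odd_q_eq (q m u : ℕ) :
    Odd_q q (2 * m) u = ∑ i ∈ Finset.range m, u / q ^ (2 * i + 1) % q := by
  induction m with
  | zero => simp [Odd_q]
  | succ m ih =>
    have h2 : 2 * (m + 1) = (2 * m + 1) + 1 := by ring
    have hx : (2 * m) % 2 = 0 := by omega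
    have hy : (2 * m + 1) % 2 = 1 := by omega
    unfold Odd_q at ih ⊢
    rw [h2, Finset.sum_filter, Finset.sum_range_succ, Finset.sum_range_succ,
      ← Finset.sum_filter, ih, Finset.sum_range_succ]
    simp [hx, hy]

lemma digit_mod_sq (q w : ℕ) : w % (q * q) = w % q + q * (w / q % q) := by
  conv_lhs => rw [← Nat.div_add_mod (w % (q * q)) q]
  rw [Nat.mod_mul_right_div_self, Nat.mod_mul_right_mod]
  omega

lemma wtqQ_decomp (q m u : ℕ) :
    wtq (q ^ 2) m u = (∑ i ∈ Finset.range m, u / q ^ (2 * i) % q)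
      + q * ∑ i ∈ Finset.range m, u / q ^ (2 * i + 1) % q := by
  unfold wtq
  rw [Finset.mul_sum, ← Finset.sum_add_distrib]
  refine Finset.sum_congr rfl fun i _ => ?_
  have h1 : (q ^ 2) ^ i = q ^ (2 * i) := by rw [← pow_mul]
  have h2 : u / q ^ (2 * i + 1) = u / q ^ (2 * i) / q := by
    rw [Nat.div_div_eq_div_mul, ← pow_succ]
  rw [h1, h2, pow_two]
  exact digit_mod_sq q (u / q ^ (2 * i))

lemma arith_bound {q k A B W : ℕ} (hq : 2 ≤ q) (hk : 1 ≤ k) (hW : W = A + B) (hBA : B ≤ A)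
    (h : W ≤ 2*k*(q-1) - 1 ∨ (W = 2*k*(q-1) ∧ A ≠ B)) :
    A + q * B < k * (q^2 - 1) := by
  have hq1 : 1 ≤ q := by omega
  set X := 2*k*(q-1) with hXdef
  have hX2 : 2 ≤ X := by
    have h1 : 1 ≤ k*(q-1) := Nat.mul_pos hk (by omega)
    have h2 : X = 2*(k*(q-1)) := by rw [hXdef]; ring
    omega
  have hWX : W ≤ X := by rcases h with h | ⟨h, -⟩ <;> omega
  have hBX : 2*B + 1 ≤ X := by
    rcases h with h | ⟨h, hne⟩
    · omega
    · omega
  have hXz : (X:ℤ) = 2*(k:ℤ)*((q:ℤ)-1) := by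
    rw [hXdef]; push_cast [Nat.cast_sub hq1]; ring
  have hgoal : (A:ℤ) + (q:ℤ) * B < (k:ℤ) * ((q:ℤ)^2 - 1) := by
    have hWz : (W:ℤ) = A + B := by exact_mod_cast hW
    have hWXz : (W:ℤ) ≤ X := by exact_mod_cast hWX
    have hBXz : 2*(B:ℤ) + 1 ≤ X := by exact_mod_cast hBX
    have hq2 : (2:ℤ) ≤ q := by exact_mod_cast hq
    have hprod : (0:ℤ) ≤ ((q:ℤ) - 1) * ((X:ℤ) - 1 - 2*B) := by
      apply mul_nonneg <;> linarith
    have hXq : (X:ℤ)*((q:ℤ)+1) = 2*(k:ℤ)*((q:ℤ)^2 - 1) := by rw [hXz]; ring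
    nlinarith [hprod, hXq, hWz, hWXz, hBXz, hq2]
  have hq2' : (1:ℕ) ≤ q^2 := Nat.one_le_pow _ _ (by omega)
  zify [hq2']
  exact hgoal

/-- let `V` be an `F_{q^2}`-subspace of `F_{q^n}` (`n = 2m`) of
`F_{q^2}`-dimension `m - ρ'`. Then for every integer `u` with
`wt_q(u) ≤ (n - 2ρ')(q-1) - 1`, or with `wt_q(u) = (n - 2ρ')(q-1)` and
`O(u) ≠ E(u)`, the power sum `Σ_{0 ≠ g ∈ V} g^u` equals `0`. -/
theorem stmt_17 {K2 F : Type*} [Field K2] [Field F] [Algebra K2 F]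
    [Fintype K2] [Fintype F] [DecidableEq F]
    (q m ρ' : ℕ) (hq : 2 ≤ q) (hρ : ρ' < m)
    (hK2 : Fintype.card K2 = q ^ 2) (hF : Fintype.card F = q ^ (2 * m))
    (V : Submodule K2 F) [Fintype ↥V] (hV : Module.finrank K2 ↥V = m - ρ')
    (u : ℕ) (hu1 : 1 ≤ u) (hu2 : u ≤ q ^ (2 * m) - 1)
    (hwt : wtq q (2 * m) u ≤ (2 * m - 2 * ρ') * (q - 1) - 1 ∨
           (wtq q (2 * m) u = (2 * m - 2 * ρ') * (q - 1) ∧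
            Odd_q q (2 * m) u ≠ Even_q q (2 * m) u)) :
    ∑ g ∈ Finset.univ.filter (fun g : V => (g : F) ≠ 0), (g : F) ^ u = 0 := by
  classical
  have hm1 : 1 ≤ m := by omega
  set k := m - ρ' with hkdef
  have hk1 : 1 ≤ k := by omega
  have hqm : 1 ≤ q ^ (2 * m) := Nat.one_le_pow _ _ (by omega)
  have hu2' : u < q ^ (2 * m) := by omega
  -- characteristic facts
  set p := ringChar F with hpdef
  haveI : CharP F p := ringChar.charP F
  have hp : p.Prime := CharP.char_is_prime F p
  haveI : Fact p.Prime := ⟨hp⟩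
  haveI : CharP K2 p := (algebraMap K2 F).charP (algebraMap K2 F).injective p
  obtain ⟨e, -, hQe⟩ := FiniteField.card K2 p
  rw [hK2] at hQe
  have hqdvd : q ∣ p ^ (e : ℕ) := by
    rw [← hQe]; exact dvd_pow_self q two_ne_zero
  obtain ⟨cc, -, hqp⟩ := (Nat.dvd_prime_pow hp).mp hqdvd
  -- the vanishing lemma specialised to V
  have vanish : ∀ w : ℕ, 1 ≤ w → w < q ^ (2 * m) → wtq (q ^ 2) m w < k * (q ^ 2 - 1) →
      ∑ g ∈ Finset.univ.filter (fun g : V => (g : F) ≠ 0), (g : F) ^ w = 0 := by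
    intro w hw1 hw2 hwtw
    have hfull : ∑ g : V, (g : F) ^ w = 0 := by
      let B := Module.finBasis K2 ↥V
      rw [← Equiv.sum_comp B.equivFun.toEquiv.symm (fun g : ↥V => ((g : F)) ^ w)]
      have hcoe : ∀ c : Fin (Module.finrank K2 ↥V) → K2,
          ((B.equivFun.toEquiv.symm c : ↥V) : F) = ∑ i, algebraMap K2 F (c i) * ((B i : V) : F) := by
        intro c
        simp only [LinearEquiv.coe_toEquiv_symm, EquivLike.coe_coe, Module.Basis.equivFun_symm_apply]
        rw [Submodule.coe_sum]
        exact Finset.sum_congr rfl fun i _ => by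
          rw [Submodule.coe_smul, Algebra.smul_def]
      calc ∑ c : Fin (Module.finrank K2 ↥V) → K2, ((B.equivFun.toEquiv.symm c : ↥V) : F) ^ w
          = ∑ c : Fin (Module.finrank K2 ↥V) → K2,
              (∑ i, algebraMap K2 F (c i) * ((B i : V) : F)) ^ w :=
            Finset.sum_congr rfl fun c _ => by rw [hcoe]
        _ = 0 := by
            apply lemA (Module.finrank K2 ↥V) _ w m hw1
            · rw [hK2, ← pow_mul]; exact hw2
            · rw [hK2, hV]; exact hwtw
    have hzero : ∑ g ∈ Finset.univ.filter (fun g : V => ¬ (g : F) ≠ 0), (g : F) ^ w = 0 := by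
      refine Finset.sum_eq_zero fun g hg => ?_
      have h0 : (g : F) = 0 := not_not.mp (Finset.mem_filter.mp hg).2
      rw [h0, zero_pow (by omega)]
    have hsum := Finset.sum_filter_add_sum_filter_not Finset.univ
      (fun g : V => (g : F) ≠ 0) (fun g : V => (g : F) ^ w)
    rw [hzero, add_zero] at hsum
    rw [hsum, hfull]
  -- digit bookkeeping
  set EE := ∑ i ∈ Finset.range m, u / q ^ (2 * i) % q with hEEdef
  set OO := ∑ i ∈ Finset.range m, u / q ^ (2 * i + 1) % q with hOOdef
  have hE : Even_q q (2 * m) u = EE := even_q_eq q m u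
  have hO : Odd_q q (2 * m) u = OO := odd_q_eq q m u
  have hWEO : wtq q (2 * m) u = EE + OO := by
    rw [wtq_eq_even_add_odd, hE, hO]
  have hwtu : wtq (q ^ 2) m u = EE + q * OO := wtqQ_decomp q m u
  -- the cyclic shift u'
  set nn := 2 * m - 1 with hnndef
  set t := u / q ^ nn with htdef
  set r := u % q ^ nn with hrdef
  set u' := q * r + t with hu'def
  have hpow : q ^ (2 * m) = q ^ nn * q := by
    rw [← pow_succ]; congr 1; omega
  have hqnn : 1 ≤ q ^ nn := Nat.one_le_pow _ _ (by omega)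
  have ht : t < q := by
    rw [htdef, Nat.div_lt_iff_lt_mul (by omega)]
    calc u < q ^ (2 * m) := hu2'
      _ = q ^ nn * q := hpow
      _ = q * q ^ nn := by ring
  have hrlt : r < q ^ nn := Nat.mod_lt _ (by omega)
  have hu'lt : u' < q ^ (2 * m) := by
    calc u' = q * r + t := rfl
      _ < q * r + q := by omega
      _ = q * (r + 1) := by ring
      _ ≤ q * q ^ nn := Nat.mul_le_mul_left q hrlt
      _ = q ^ (2 * m) := by rw [hpow, Nat.mul_comm]
  have hu'1 : 1 ≤ u' := by
    rcases Nat.eq_zero_or_pos t with h0 | h1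
    · have hult : u < q ^ nn := ((Nat.div_eq_zero_iff).mp h0).resolve_left (by omega)
      have hru : r = u := by rw [hrdef, Nat.mod_eq_of_lt hult]
      have h2 : 1 ≤ q * r := Nat.mul_pos (by omega) (by omega)
      calc 1 ≤ q * r := h2
        _ ≤ q * r + t := Nat.le_add_right _ _
    · calc 1 ≤ t := h1
        _ ≤ q * r + t := Nat.le_add_left _ _
  have hkey : u * q = u' + (q ^ (2 * m) - 1) * t := by
    have h1 : q ^ nn * t + r = u := Nat.div_add_mod u (q ^ nn)
    zify [hqm]
    have h1' : (q : ℤ) ^ nn * t + r = u := by exact_mod_cast h1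
    have hpow' : (q : ℤ) ^ (2 * m) = q ^ nn * q := by exact_mod_cast hpow
    have hu'' : (u' : ℤ) = q * r + t := by exact_mod_cast hu'def
    rw [hu'']
    linear_combination (-(q : ℤ)) * h1' - (t : ℤ) * hpow'
  have hfrob : ∀ g : F, g ≠ 0 → g ^ (u * q) = g ^ u' := by
    intro g hg
    rw [hkey, pow_add, pow_mul, ← hF, FiniteField.pow_card_sub_one_eq_one g hg, one_pow, mul_one]
  -- digits of u'
  have hdiv : u' / q = r := by
    rw [hu'def, Nat.mul_add_div (by omega), Nat.div_eq_of_lt ht, add_zero]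
  have hd0 : u' % q = t := by
    rw [hu'def, Nat.mul_add_mod, Nat.mod_eq_of_lt ht]
  have hdi : ∀ i, i < nn → u' / q ^ (i + 1) % q = u / q ^ i % q := by
    intro i hi
    have e1 : u' / q ^ (i + 1) = r / q ^ i := by
      rw [pow_succ', ← Nat.div_div_eq_div_mul, hdiv]
    rw [e1, hrdef]
    have e2 : q ^ nn = q ^ i * q ^ (nn - i) := by rw [← pow_add]; congr 1; omega
    rw [e2, Nat.mod_mul_right_div_self]
    exact Nat.mod_mod_of_dvd _ (dvd_pow_self q (by omega))
  have hOO' : (∑ i ∈ Finset.range m, u' / q ^ (2 * i + 1) % q) = EE := by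
    rw [hEEdef]
    refine Finset.sum_congr rfl fun i hij => ?_
    exact hdi (2 * i) (by have := Finset.mem_range.mp hij; omega)
  have hEE' : (∑ i ∈ Finset.range m, u' / q ^ (2 * i) % q) = OO := by
    obtain ⟨mm, hmm⟩ : ∃ mm, m = mm + 1 := ⟨m - 1, by omega⟩
    rw [hOOdef, hmm, Finset.sum_range_succ', Finset.sum_range_succ]
    congr 1
    · refine Finset.sum_congr rfl fun i hij => ?_
      have hi := Finset.mem_range.mp hij
      have h5 : 2 * (i + 1) = (2 * i + 1) + 1 := by ring
      rw [h5]
      exact hdi (2 * i + 1) (by omega)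
    · have h6 : nn = 2 * mm + 1 := by omega
      simp only [Nat.mul_zero, pow_zero, Nat.div_one]
      rw [hd0, htdef, ← h6]
      exact (Nat.mod_eq_of_lt ht).symm
  have hwtu' : wtq (q ^ 2) m u' = OO + q * EE := by
    rw [wtqQ_decomp, hOO', hEE']
  -- rewrite the hypothesis
  have h2k : 2 * m - 2 * ρ' = 2 * k := by omega
  rw [h2k, hE, hO, hWEO] at hwt
  -- case split
  by_cases hcase : OO ≤ EE
  · refine vanish u hu1 hu2' ?_
    rw [hwtu]
    exact arith_bound hq hk1 rfl hcase (by tauto)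
  · push_neg at hcase
    have hX : (∑ g ∈ Finset.univ.filter (fun g : V => (g : F) ≠ 0), (g : F) ^ u) ^ q = 0 := by
      have h1 : (∑ g ∈ Finset.univ.filter (fun g : V => (g : F) ≠ 0), (g : F) ^ u) ^ q
          = ∑ g ∈ Finset.univ.filter (fun g : V => (g : F) ≠ 0), ((g : F) ^ u) ^ q := by
        rw [hqp]
        exact sum_pow_char_pow _ _ _ _
      rw [h1]
      calc ∑ g ∈ Finset.univ.filter (fun g : V => (g : F) ≠ 0), ((g : F) ^ u) ^ q
          = ∑ g ∈ Finset.univ.filter (fun g : V => (g : F) ≠ 0), (g : F) ^ u' := by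
            refine Finset.sum_congr rfl fun g hg => ?_
            have hgne := (Finset.mem_filter.mp hg).2
            rw [← pow_mul]
            exact hfrob (g : F) hgne
        _ = 0 := by
            refine vanish u' hu'1 hu'lt ?_
            rw [hwtu']
            exact arith_bound hq hk1 (Nat.add_comm EE OO) (le_of_lt hcase) hwt
    exact pow_eq_zero_iff (show q ≠ 0 by omega) |>.mp hX
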